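/- (Characterization of canonical transformations by Poisson brackets.) Let E, ω be as in the setup, let c be a nonzero real number, and let Φ : E → E be a C¹ diffeomorphism (Φ is bijective and both Φ and its inverse are continuously differentiable). Then the following are equivalent: (a) Φ is a canonical transformation of valence c, i.e. Φ*ω = cω: ω(DΦ_x(u), DΦ_x(v)) = c·ω(u,v) for all x, u, v ∈ E; (b) Φ rescales all Poisson brackets by 1/c: for all differentiable f, g : E → ℝ, all Hamiltonian vector fields X_f of f and X_g of g, and all Hamiltonian vector fields Y of f∘Φ and Z of g∘Φ, one has ω(X_f(Φ(x)), X_g(Φ(x))) = (1/c)·ω(Y(x), Z(x)) for all x ∈ E (i.e. Φ*{f,g} = (1/c){Φ*f, Φ*g}). -/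

import Mathlib

/-- **Characterization of canonical transformations by Poisson brackets.**
On a symplectic vector space `(E, ω)`, let `c ≠ 0` and let `Φ` be a `C¹` diffeomorphism
(with `C¹` inverse `Ψ`). Then `Φ` is a canonical transformation of valence `c`
(`ω(DΦ_x(u), DΦ_x(v)) = c·ω(u,v)` for all `x,u,v`) if and only if `Φ` rescales all
Poisson brackets by `1/c`: for all differentiable `f, g` with Hamiltonian vector fields
`X_f, X_g`, and Hamiltonian vector fields `Y` of `f∘Φ` and `Z` of `g∘Φ`,
`ω(X_f(Φ(x)), X_g(Φ(x))) = (1/c)·ω(Y(x), Z(x))` for all `x`. -/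
theorem symplectic_canonical_transformation_iff_poisson
    (E : Type*) [NormedAddCommGroup E] [NormedSpace ℝ E] [FiniteDimensional ℝ E]
    (ω : E →ₗ[ℝ] E →ₗ[ℝ] ℝ)
    (halt : ∀ u : E, ω u u = 0)
    (hnd : ∀ u : E, (∀ v : E, ω u v = 0) → u = 0)
    (c : ℝ) (hc : c ≠ 0)
    (Φ Ψ : E → E)
    (hΨΦ : Function.LeftInverse Ψ Φ) (hΦΨ : Function.RightInverse Ψ Φ)
    (hΦ : ContDiff ℝ 1 Φ) (hΨ : ContDiff ℝ 1 Ψ) :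
    (∀ x u v : E, ω (fderiv ℝ Φ x u) (fderiv ℝ Φ x v) = c * ω u v) ↔
    (∀ f g : E → ℝ, Differentiable ℝ f → Differentiable ℝ g →
      ∀ Xf Xg Y Z : E → E,
        (∀ x v : E, ω (Xf x) v = fderiv ℝ f x v) →
        (∀ x v : E, ω (Xg x) v = fderiv ℝ g x v) →
        (∀ x v : E, ω (Y x) v = fderiv ℝ (f ∘ Φ) x v) →
        (∀ x v : E, ω (Z x) v = fderiv ℝ (g ∘ Φ) x v) →
        ∀ x : E, ω (Xf (Φ x)) (Xg (Φ x)) = (1 / c) * ω (Y x) (Z x)) := by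
  have hdΦ : Differentiable ℝ Φ := hΦ.differentiable one_ne_zero
  have hdΨ : Differentiable ℝ Ψ := hΨ.differentiable one_ne_zero
  -- skew symmetry
  have hskew : ∀ u v : E, ω u v = - ω v u := by
    intro u v
    have h := halt (u + v)
    simp only [map_add, LinearMap.add_apply, halt] at h
    linarith
  have hnd2 : ∀ z : E, (∀ u : E, ω u z = 0) → z = 0 := by
    intro z h
    refine hnd z fun v => ?_
    rw [hskew, h v, neg_zero]
  -- derivative inverse relations
  have hS'S : ∀ x w : E, fderiv ℝ Ψ (Φ x) (fderiv ℝ Φ x w) = w := by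
    intro x w
    have h1 : fderiv ℝ (Ψ ∘ Φ) x = (fderiv ℝ Ψ (Φ x)).comp (fderiv ℝ Φ x) :=
      fderiv_comp x (hdΨ (Φ x)) (hdΦ x)
    rw [hΨΦ.id, fderiv_id] at h1
    exact (congrArg (fun L => (L : E →L[ℝ] E) w) h1.symm)
  have hSS' : ∀ x w : E, fderiv ℝ Φ x (fderiv ℝ Ψ (Φ x) w) = w := by
    intro x w
    have h1 : fderiv ℝ (Φ ∘ Ψ) (Φ x) = (fderiv ℝ Φ (Ψ (Φ x))).comp (fderiv ℝ Ψ (Φ x)) :=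
      fderiv_comp (Φ x) (hdΦ (Ψ (Φ x))) (hdΨ (Φ x))
    rw [hΦΨ.id, fderiv_id, hΨΦ x] at h1
    exact (congrArg (fun L => (L : E →L[ℝ] E) w) h1.symm)
  constructor
  · -- forward
    intro ha f g hf hg Xf Xg Y Z hXf hXg hY hZ x
    set S := fderiv ℝ Φ x with hS
    set a := fderiv ℝ Ψ (Φ x) (Xf (Φ x)) with haa
    set b := fderiv ℝ Ψ (Φ x) (Xg (Φ x)) with hbb
    have hSa : S a = Xf (Φ x) := hSS' x _
    have hSb : S b = Xg (Φ x) := hSS' x _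
    have hcomp : ∀ (h : E → ℝ), Differentiable ℝ h →
        ∀ w : E, fderiv ℝ (h ∘ Φ) x w = fderiv ℝ h (Φ x) (S w) := by
      intro h hh w
      rw [fderiv_comp x (hh (Φ x)) (hdΦ x)]
      rfl
    have hYx : Y x = c • a := by
      have key : ∀ w : E, ω (Y x - c • a) w = 0 := by
        intro w
        have h1 : ω (Y x) w = fderiv ℝ (f ∘ Φ) x w := hY x w
        rw [hcomp f hf w, ← hXf (Φ x) (S w), ← hSa, ha x a w] at h1
        simp only [map_sub, map_smul, LinearMap.sub_apply, LinearMap.smul_apply,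
          smul_eq_mul, h1]
        ring
      exact sub_eq_zero.mp (hnd _ key)
    have hZx : Z x = c • b := by
      have key : ∀ w : E, ω (Z x - c • b) w = 0 := by
        intro w
        have h1 : ω (Z x) w = fderiv ℝ (g ∘ Φ) x w := hZ x w
        rw [hcomp g hg w, ← hXg (Φ x) (S w), ← hSb, ha x b w] at h1
        simp only [map_sub, map_smul, LinearMap.sub_apply, LinearMap.smul_apply,
          smul_eq_mul, h1]
        ring
      exact sub_eq_zero.mp (hnd _ key)
    rw [hYx, hZx, ← hSa, ← hSb, ha x a b]
    simp only [map_smul, LinearMap.smul_apply, smul_eq_mul]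
    field_simp
  · -- backward
    intro hb x u v
    -- surjectivity of ω : E → Dual
    have hωinj : Function.Injective ω := by
      intro p q h
      have : ∀ w : E, ω (p - q) w = 0 := by
        intro w
        simp [map_sub, h]
      exact sub_eq_zero.mp (hnd _ this)
    have hωsurj : Function.Surjective ω :=
      (LinearMap.injective_iff_surjective_of_finrank_eq_finrank
        (Subspace.dual_finrank_eq).symm).mp hωinj
    -- T u y is the Hamiltonian vector field of (ω u ·) ∘ Φ at y
    set T : E → E → E := fun u y =>
      (hωsurj ((ω u).comp ((fderiv ℝ Φ y : E →L[ℝ] E) : E →ₗ[ℝ] E))).choose with hT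
    have hTspec : ∀ u y w : E, ω (T u y) w = ω u (fderiv ℝ Φ y w) := by
      intro u y w
      have := (hωsurj ((ω u).comp ((fderiv ℝ Φ y : E →L[ℝ] E) : E →ₗ[ℝ] E))).choose_spec
      exact congrArg (fun L => L w) this
    -- key identity from hypothesis (b) with linear functions
    have key : ∀ p q : E, c * ω p q = ω (T p x) (T q x) := by
      intro p q
      have hfd : ∀ p : E, Differentiable ℝ (fun y => ω p y) := by
        intro p
        exact (LinearMap.toContinuousLinearMap (ω p)).differentiable
      have hfderiv : ∀ (p y w : E), fderiv ℝ (fun z => ω p z) y w = ω p w := by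
        intro p y w
        have h0 := (LinearMap.toContinuousLinearMap (ω p)).fderiv (x := y)
        show (fderiv ℝ (⇑(LinearMap.toContinuousLinearMap (ω p))) y) w = (ω p) w
        rw [h0]
        rfl
      have hcompd : ∀ (p y w : E),
          fderiv ℝ ((fun z => ω p z) ∘ Φ) y w = ω p (fderiv ℝ Φ y w) := by
        intro p y w
        rw [fderiv_comp y (hfd p (Φ y)) (hdΦ y)]
        show fderiv ℝ (fun z => ω p z) (Φ y) (fderiv ℝ Φ y w) = _
        rw [hfderiv]
      have h := hb (fun z => ω p z) (fun z => ω q z) (hfd p) (hfd q)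
        (fun _ => p) (fun _ => q) (T p) (T q)
        (fun y w => (hfderiv p y w).symm) (fun y w => (hfderiv q y w).symm)
        (fun y w => by rw [hTspec p y w, hcompd p y w])
        (fun y w => by rw [hTspec q y w, hcompd q y w]) x
      field_simp at h
      linarith
    set S := fderiv ℝ Φ x with hS
    have step1 : ∀ q : E, S (T q x) = c • q := by
      intro q
      have h : ∀ p : E, ω p (S (T q x) - c • q) = 0 := by
        intro p
        have h1 : ω (T p x) (T q x) = ω p (S (T q x)) := hTspec p x (T q x)
        have h2 := key p q
        simp only [map_sub, map_smul, smul_eq_mul]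
        rw [← h1, ← h2]
        ring
      exact sub_eq_zero.mp (hnd2 _ h)
    have step2 : T (S u) x = c • u := by
      have h1 : S (T (S u) x) = S (c • u) := by
        rw [step1 (S u), map_smul]
      have := congrArg (fderiv ℝ Ψ (Φ x)) h1
      rwa [hS'S x, hS'S x] at this
    have h3 : ω (T (S u) x) v = ω (S u) (S v) := hTspec (S u) x v
    rw [step2] at h3
    simp only [map_smul, LinearMap.smul_apply, smul_eq_mul] at h3
    linarith
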